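/- arXiv:2406.17096 — 2 statements merged into one kernel-verified Lean document; each statement's English description precedes it below -/
import Mathlib

section
/- Expected uniform bias of empirical total-variation dual values (bias part of Theorem 4.1, TV case): Let S and A be finite nonempty sets, σ ≥ 0, r_max > 0, γ ∈ [0,1), and V : S → ℝ with 0 ≤ V(s) ≤ r_max/(1−γ) for all s. For each (s,a) ∈ S × A let p_{s,a} be a pmf on S, let m ∈ ℕ, set n = 2^{m+1}, and suppose n ≥ 2(m+1)·log 2 + log(18·|S|·|A|). For each (s,a) let p̂_{s,a} be the empirical pmf of n i.i.d. samples from p_{s,a}, with all samples across all pairs (s,a) mutually independent. Then E[ max_{(s,a) ∈ S×A} | f*_TV(p̂_{s,a}, V) − f*_TV(p_{s,a}, V) | ] ≤ (r_max/(1−γ)) · 2^{−(m+1)/2} · ( 2^{−(m+1)/2} + 3·sqrt( 2(m+1)·log 2 + log(18·|S|·|A|) ) ). -/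
open Finset MeasureTheory ProbabilityTheory

/-- `p` is a probability mass function on the finite nonempty type `S`. -/
def IsPmf {S : Type*} [Fintype S] (p : S → ℝ) : Prop :=
  (∀ s, 0 ≤ p s) ∧ ∑ s, p s = 1

/-- The total-variation dual value with uncertainty level `σ`:
`f*_TV(p, v) = sup_{α ≥ 0} { E_p[(v)_α] − σ·(α − min_s v(s)) }`. -/
noncomputable def fstarTV {S : Type*} [Fintype S] (σ : ℝ) (p v : S → ℝ) : ℝ :=
  sSup {x : ℝ | ∃ α : ℝ, 0 ≤ α ∧
    x = (∑ s, p s * min (v s) α) - σ * (α - ⨅ s, v s)}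

section Aux
set_option linter.unusedSectionVars false
set_option linter.unusedVariables false

lemma cosh_aux (x : ℝ) : (Real.exp x + Real.exp (-x))/2 ≤ Real.exp (x^2) := by
  rcases le_or_gt |x| 1 with h | h
  · have h1 := Real.exp_bound h (n := 2) (by norm_num)
    have h2 := Real.exp_bound (x := -x) (by simpa using h) (n := 2) (by norm_num)
    simp only [Finset.sum_range_succ, Finset.sum_range_zero, Nat.factorial, abs_neg] at h1 h2
    norm_num at h1 h2
    have hsq : |x|^2 = x^2 := sq_abs x
    have e1 := abs_le.1 h1
    have e2 := abs_le.1 h2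
    have : (Real.exp x + Real.exp (-x))/2 ≤ 1 + x^2 := by nlinarith
    exact this.trans (by nlinarith [Real.add_one_le_exp (x^2)])
  · have hx2 : |x| ≤ x^2 := by nlinarith [abs_nonneg x, sq_abs x]
    have e1 : Real.exp x ≤ Real.exp (x^2) := Real.exp_le_exp.2 ((le_abs_self x).trans hx2)
    have e2 : Real.exp (-x) ≤ Real.exp (x^2) := Real.exp_le_exp.2 ((neg_le_abs x).trans hx2)
    linarith

lemma integrable_of_bdd {Ω : Type*} [MeasurableSpace Ω] {μ : Measure Ω} [IsProbabilityMeasure μ]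
    {f : Ω → ℝ} (hm : Measurable f) (C : ℝ) (hb : ∀ ω, |f ω| ≤ C) :
    Integrable f μ :=
  (integrable_const C).mono' hm.aestronglyMeasurable (Filter.Eventually.of_forall hb)

lemma mgf_aux {Ω : Type*} [MeasurableSpace Ω] (μ : Measure Ω) [IsProbabilityMeasure μ]
    (Z : Ω → ℝ) (hm : Measurable Z) (hb : ∀ ω, |Z ω| ≤ 1) (h0 : ∫ ω, Z ω ∂μ = 0) (t : ℝ) :
    mgf Z μ t ≤ Real.exp (t^2) := by
  have key : ∀ ω, Real.exp (t * Z ω) ≤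
      (Real.exp t + Real.exp (-t))/2 + Z ω * ((Real.exp t - Real.exp (-t))/2) := by
    intro ω
    have hz := abs_le.1 (hb ω)
    have hcv := convexOn_exp.2 (x := -t) (y := t) (Set.mem_univ (-t)) (Set.mem_univ t)
      (show (0:ℝ) ≤ (1 - Z ω)/2 by linarith) (show (0:ℝ) ≤ (1 + Z ω)/2 by linarith)
      (show (1 - Z ω)/2 + (1 + Z ω)/2 = 1 by ring)
    simp only [smul_eq_mul] at hcv
    have harg : (1 - Z ω)/2 * (-t) + (1 + Z ω)/2 * t = t * Z ω := by ring
    rw [harg] at hcv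
    refine hcv.trans_eq ?_
    ring
  have hint1 : Integrable (fun ω => Real.exp (t * Z ω)) μ := by
    refine integrable_of_bdd ((hm.const_mul t).exp) (Real.exp |t|) (fun ω => ?_)
    rw [abs_of_pos (Real.exp_pos _)]
    refine Real.exp_le_exp.2 ?_
    calc t * Z ω ≤ |t * Z ω| := le_abs_self _
    _ = |t| * |Z ω| := abs_mul _ _
    _ ≤ |t| * 1 := mul_le_mul_of_nonneg_left (hb ω) (abs_nonneg t)
    _ = |t| := mul_one _
  have hint2 : Integrable (fun ω => (Real.exp t + Real.exp (-t))/2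
      + Z ω * ((Real.exp t - Real.exp (-t))/2)) μ :=
    (integrable_const _).add ((integrable_of_bdd hm 1 hb).mul_const _)
  have : mgf Z μ t ≤ ∫ ω, ((Real.exp t + Real.exp (-t))/2
      + Z ω * ((Real.exp t - Real.exp (-t))/2)) ∂μ :=
    integral_mono hint1 hint2 key
  refine this.trans ?_
  rw [integral_add (integrable_const _) ((integrable_of_bdd hm 1 hb).mul_const _),
    integral_const, integral_mul_const, h0]
  simp only [measureReal_def, measure_univ, ENNReal.toReal_one, smul_eq_mul, one_mul, zero_mul, add_zero]
  exact cosh_aux t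

lemma chernoff_sum {Ω : Type*} [MeasurableSpace Ω] (μ : Measure Ω) [IsProbabilityMeasure μ]
    (n : ℕ) (hn : 0 < n) (Z : Fin n → Ω → ℝ) (hm : ∀ i, Measurable (Z i))
    (hb : ∀ i ω, |Z i ω| ≤ 1) (h0 : ∀ i, ∫ ω, Z i ω ∂μ = 0)
    (hindep : iIndepFun Z μ) (t : ℝ) (ht : 0 ≤ t) :
    (μ {ω | t ≤ (∑ i, Z i ω) / n}).toReal ≤ Real.exp (-(n * t^2)/4) := by
  have hnR : (0:ℝ) < n := Nat.cast_pos.2 hn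
  have hset : {ω | t ≤ (∑ i, Z i ω) / n} = {ω | n * t ≤ (∑ i, Z i) ω} := by
    ext ω
    simp only [Set.mem_setOf_eq, Finset.sum_apply]
    rw [le_div_iff₀ hnR, mul_comm]
  rw [hset]
  have hsm : Measurable (∑ i, Z i) := by
    have he : (∑ i, Z i) = fun a => ∑ i, Z i a := by ext a; simp [Finset.sum_apply]
    rw [he]
    exact Finset.measurable_sum (f := Z) Finset.univ (fun i _ => hm i)
  have hsb : ∀ ω, |(∑ i, Z i) ω| ≤ n := by
    intro ω
    simp only [Finset.sum_apply]
    calc |∑ i, Z i ω| ≤ ∑ i, |Z i ω| := Finset.abs_sum_le_sum_abs _ _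
    _ ≤ ∑ _i : Fin n, (1:ℝ) := Finset.sum_le_sum (fun i _ => hb i ω)
    _ = n := by simp
  have hint : Integrable (fun ω => Real.exp ((t/2) * (∑ i, Z i) ω)) μ := by
    refine integrable_of_bdd ((hsm.const_mul _).exp) (Real.exp ((t/2) * n)) (fun ω => ?_)
    rw [abs_of_pos (Real.exp_pos _)]
    refine Real.exp_le_exp.2 ?_
    calc (t/2) * (∑ i, Z i) ω ≤ (t/2) * |(∑ i, Z i) ω| :=
      mul_le_mul_of_nonneg_left (le_abs_self _) (by linarith)
    _ ≤ (t/2) * n := mul_le_mul_of_nonneg_left (hsb ω) (by linarith)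
  have hch := measure_ge_le_exp_mul_mgf (μ := μ) (X := ∑ i, Z i) (t := t/2)
    (n * t) (by linarith) hint
  refine hch.trans ?_
  have hmgf : mgf (∑ i, Z i) μ (t/2) ≤ Real.exp (n * (t/2)^2) := by
    rw [iIndepFun.mgf_sum hindep hm Finset.univ]
    calc ∏ i : Fin n, mgf (Z i) μ (t/2) ≤ ∏ _i : Fin n, Real.exp ((t/2)^2) :=
      Finset.prod_le_prod (fun i _ => mgf_nonneg) (fun i _ => mgf_aux μ (Z i) (hm i) (hb i) (h0 i) _)
    _ = Real.exp (n * (t/2)^2) := by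
      rw [Finset.prod_const, ← Real.exp_nat_mul]
      simp [mul_comm]
  calc Real.exp (-(t/2) * (n * t)) * mgf (∑ i, Z i) μ (t/2)
      ≤ Real.exp (-(t/2) * (n * t)) * Real.exp (n * (t/2)^2) :=
        mul_le_mul_of_nonneg_left hmgf (le_of_lt (Real.exp_pos _))
  _ = Real.exp (-(t/2) * (n * t) + n * (t/2)^2) := (Real.exp_add _ _).symm
  _ ≤ Real.exp (-(n * t^2)/4) := by
      refine Real.exp_le_exp.2 ?_
      have : -(t/2) * (n * t) + n * (t/2)^2 = -(n * t^2)/4 := by ring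
      linarith [this.le]

lemma indicator_int (c α : ℝ) (hc : 0 ≤ c) (hα : 0 ≤ α) :
    ∫ t in Set.Ioc 0 α, (Set.Iio c).indicator (fun _ => (1:ℝ)) t = min c α := by
  rw [integral_indicator measurableSet_Iio, setIntegral_const, measureReal_def,
    Measure.restrict_apply measurableSet_Iio]
  have hvol : volume (Set.Iio c ∩ Set.Ioc 0 α) = ENNReal.ofReal (min c α) := by
    rcases lt_or_ge α c with h | h
    · have : Set.Iio c ∩ Set.Ioc 0 α = Set.Ioc 0 α := by
        ext t
        simp only [Set.mem_inter_iff, Set.mem_Iio, Set.mem_Ioc]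
        exact ⟨fun ⟨_, h2⟩ => h2, fun h2 => ⟨lt_of_le_of_lt h2.2 h, h2⟩⟩
      rw [this, Real.volume_Ioc, min_eq_right h.le, sub_zero]
    · have : Set.Iio c ∩ Set.Ioc 0 α = Set.Ioo 0 c := by
        ext t
        simp only [Set.mem_inter_iff, Set.mem_Iio, Set.mem_Ioc, Set.mem_Ioo]
        exact ⟨fun ⟨h1, h2⟩ => ⟨h2.1, h1⟩, fun h2 => ⟨h2.2, h2.1, h2.2.le.trans h⟩⟩
      rw [this, Real.volume_Ioo, min_eq_left h, sub_zero]
  rw [hvol, smul_eq_mul, mul_one, ENNReal.toReal_ofReal (le_min hc hα)]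

lemma core {S : Type*} [Fintype S] [Nonempty S] (V d : S → ℝ) (hV : ∀ s, 0 ≤ V s)
    (M α : ℝ) (hα : 0 ≤ α) (hαM : α ≤ M) :
    |∑ s, d s * min (V s) α| ≤
      M * ⨆ s'' : S, |∑ s ∈ univ.filter (fun s => V s'' ≤ V s), d s| := by
  set C := ⨆ s'' : S, |∑ s ∈ univ.filter (fun s => V s'' ≤ V s), d s| with hCdef
  have hbdd : BddAbove (Set.range fun s'' : S =>
      |∑ s ∈ univ.filter (fun s => V s'' ≤ V s), d s|) :=
    Set.Finite.bddAbove (Set.finite_range _)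
  have hC0 : 0 ≤ C :=
    le_trans (abs_nonneg _) (le_ciSup hbdd (Classical.arbitrary S))
  haveI : IsFiniteMeasure (volume.restrict (Set.Ioc (0:ℝ) α)) :=
    ⟨by rw [Measure.restrict_apply_univ]; exact measure_Ioc_lt_top⟩
  have hint : ∀ s : S, Integrable ((Set.Iio (V s)).indicator (fun _ => (1:ℝ)))
      (volume.restrict (Set.Ioc 0 α)) := fun s =>
    (integrable_const 1).indicator measurableSet_Iio
  have heq : ∑ s, d s * min (V s) α = ∫ t in Set.Ioc 0 α,
      (∑ s, d s * (Set.Iio (V s)).indicator (fun _ => (1:ℝ)) t) := by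
    rw [integral_finset_sum _ (fun s _ => ((hint s).const_mul (d s)))]
    refine Finset.sum_congr rfl (fun s _ => ?_)
    rw [MeasureTheory.integral_const_mul, indicator_int (V s) α (hV s) hα]
  rw [heq]
  have hb : ∀ t ∈ Set.Ioc (0:ℝ) α,
      ‖∑ s, d s * (Set.Iio (V s)).indicator (fun _ => (1:ℝ)) t‖ ≤ C := by
    intro t ht
    rw [Real.norm_eq_abs]
    have hrw : ∑ s, d s * (Set.Iio (V s)).indicator (fun _ => (1:ℝ)) t
        = ∑ s ∈ univ.filter (fun s => t < V s), d s := by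
      rw [Finset.sum_filter]
      refine Finset.sum_congr rfl (fun s _ => ?_)
      by_cases h : t < V s
      · simp [Set.indicator_apply, Set.mem_Iio, h]
      · simp [Set.indicator_apply, Set.mem_Iio, h]
    rw [hrw]
    rcases Finset.eq_empty_or_nonempty (univ.filter (fun s => t < V s)) with he | hne
    · rw [he]; simpa using hC0
    · obtain ⟨s₀, hs₀T, hs₀min⟩ := Finset.exists_min_image _ V hne
      have ht₀ : t < V s₀ := (Finset.mem_filter.1 hs₀T).2
      have hTeq : univ.filter (fun s => t < V s) = univ.filter (fun s => V s₀ ≤ V s) := by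
        ext s
        simp only [Finset.mem_filter, Finset.mem_univ, true_and]
        constructor
        · intro h; exact hs₀min s (Finset.mem_filter.2 ⟨Finset.mem_univ s, h⟩)
        · intro h; exact lt_of_lt_of_le ht₀ h
      rw [hTeq]
      exact le_ciSup hbdd s₀
  have hkey := MeasureTheory.norm_setIntegral_le_of_norm_le_const (μ := volume) (s := Set.Ioc 0 α)
    measure_Ioc_lt_top hb
  rw [Real.norm_eq_abs] at hkey
  refine hkey.trans ?_
  rw [measureReal_def, Real.volume_Ioc]
  rw [show (ENNReal.ofReal (α - 0)).toReal = α by rw [sub_zero, ENNReal.toReal_ofReal hα]]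
  nlinarith [hC0, hαM, hα]


section fstar
variable {S : Type*} [Fintype S] [Nonempty S]

lemma fstar_mem {σ : ℝ} {p v : S → ℝ} (α : ℝ) (hα : 0 ≤ α) :
    (∑ s, p s * min (v s) α) - σ * (α - ⨅ s, v s) ∈
      {x : ℝ | ∃ α : ℝ, 0 ≤ α ∧
        x = (∑ s, p s * min (v s) α) - σ * (α - ⨅ s, v s)} :=
  ⟨α, hα, rfl⟩

lemma fstar_bddAbove (σ M : ℝ) (hσ : 0 ≤ σ) (hM : 0 ≤ M) (V : S → ℝ)
    (hV0 : ∀ s, 0 ≤ V s) (hVM : ∀ s, V s ≤ M) (p : S → ℝ) (hp : IsPmf p) :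
    ∀ x ∈ {x : ℝ | ∃ α : ℝ, 0 ≤ α ∧
        x = (∑ s, p s * min (V s) α) - σ * (α - ⨅ s, V s)}, x ≤ M + σ * M := by
  rintro x ⟨α, hα, rfl⟩
  have hiM : (⨅ s, V s) ≤ M :=
    le_trans (ciInf_le (Set.Finite.bddBelow (Set.finite_range V)) (Classical.arbitrary S))
      (hVM _)
  have h1 : ∑ s, p s * min (V s) α ≤ M := by
    calc ∑ s, p s * min (V s) α ≤ ∑ s, p s * M := by
          refine Finset.sum_le_sum (fun s _ => ?_)
          exact mul_le_mul_of_nonneg_left ((min_le_left _ _).trans (hVM s)) (hp.1 s)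
    _ = M := by rw [← Finset.sum_mul, hp.2, one_mul]
  have h2 : -(σ * (α - ⨅ s, V s)) ≤ σ * M := by
    have : σ * (α - ⨅ s, V s) ≥ σ * (0 - M) :=
      mul_le_mul_of_nonneg_left (by linarith) hσ
    nlinarith
  linarith

lemma fstar_nonneg (σ M : ℝ) (hσ : 0 ≤ σ) (hM : 0 ≤ M) (V : S → ℝ)
    (hV0 : ∀ s, 0 ≤ V s) (hVM : ∀ s, V s ≤ M) (p : S → ℝ) (hp : IsPmf p) :
    0 ≤ fstarTV σ p V := by
  have hi0 : 0 ≤ ⨅ s, V s := le_ciInf hV0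
  have hmem := fstar_mem (σ := σ) (p := p) (v := V) 0 le_rfl
  have hval : (∑ s, p s * min (V s) 0) - σ * (0 - ⨅ s, V s) = σ * (⨅ s, V s) := by
    rw [Finset.sum_congr rfl (fun s _ => by rw [min_eq_right (hV0 s), mul_zero])]
    simp
  have hb : BddAbove {x : ℝ | ∃ α : ℝ, 0 ≤ α ∧
      x = (∑ s, p s * min (V s) α) - σ * (α - ⨅ s, V s)} :=
    ⟨M + σ * M, fstar_bddAbove σ M hσ hM V hV0 hVM p hp⟩
  have := le_csSup hb hmem
  rw [hval] at this
  exact le_trans (mul_nonneg hσ hi0) this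

lemma fstar_le (σ M : ℝ) (hσ : 0 ≤ σ) (hM : 0 ≤ M) (V : S → ℝ)
    (hV0 : ∀ s, 0 ≤ V s) (hVM : ∀ s, V s ≤ M) (p q : S → ℝ) (hp : IsPmf p) :
    fstarTV σ q V ≤ fstarTV σ p V +
      M * ⨆ s'' : S, |∑ s ∈ univ.filter (fun s => V s'' ≤ V s), (q s - p s)| := by
  set C := ⨆ s'' : S, |∑ s ∈ univ.filter (fun s => V s'' ≤ V s), (q s - p s)| with hC
  have hbdd : BddAbove (Set.range fun s'' : S =>
      |∑ s ∈ univ.filter (fun s => V s'' ≤ V s), (q s - p s)|) :=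
    Set.Finite.bddAbove (Set.finite_range _)
  have hC0 : 0 ≤ C := le_trans (abs_nonneg _) (le_ciSup hbdd (Classical.arbitrary S))
  have hb : BddAbove {x : ℝ | ∃ α : ℝ, 0 ≤ α ∧
      x = (∑ s, p s * min (V s) α) - σ * (α - ⨅ s, V s)} :=
    ⟨M + σ * M, fstar_bddAbove σ M hσ hM V hV0 hVM p hp⟩
  have helper : ∀ α : ℝ, 0 ≤ α → α ≤ M →
      (∑ s, q s * min (V s) α) - σ * (α - ⨅ s, V s) ≤ fstarTV σ p V + M * C := by
    intro α hα hαM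
    have hsplit : ∑ s, q s * min (V s) α
        = (∑ s, p s * min (V s) α) + ∑ s, (q s - p s) * min (V s) α := by
      rw [← Finset.sum_add_distrib]
      exact Finset.sum_congr rfl (fun s _ => by ring)
    have hcore := core V (fun s => q s - p s) hV0 M α hα hαM
    have h1 : (∑ s, p s * min (V s) α) - σ * (α - ⨅ s, V s) ≤ fstarTV σ p V :=
      le_csSup hb (fstar_mem α hα)
    have h2 : ∑ s, (q s - p s) * min (V s) α ≤ M * C := le_trans (le_abs_self _) hcore
    rw [hsplit]; unfold C at h2 ⊢; linarith
  refine Real.sSup_le ?_ ?_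
  · rintro x ⟨α, hα, rfl⟩
    rcases le_total α M with hle | hgt
    · exact helper α hα hle
    · have hmin : ∀ s, min (V s) α = min (V s) M := fun s => by
        rw [min_eq_left ((hVM s).trans hgt), min_eq_left (hVM s)]
      have hsum : ∑ s, q s * min (V s) α = ∑ s, q s * min (V s) M :=
        Finset.sum_congr rfl (fun s _ => by rw [hmin s])
      have hσle : σ * (M - ⨅ s, V s) ≤ σ * (α - ⨅ s, V s) :=
        mul_le_mul_of_nonneg_left (by linarith) hσ
      have := helper M hM le_rfl
      rw [hsum]; linarith
  · have := fstar_nonneg σ M hσ hM V hV0 hVM p hp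
    positivity

lemma fstar_diff (σ M : ℝ) (hσ : 0 ≤ σ) (hM : 0 ≤ M) (V : S → ℝ)
    (hV0 : ∀ s, 0 ≤ V s) (hVM : ∀ s, V s ≤ M) (p q : S → ℝ) (hp : IsPmf p) (hq : IsPmf q) :
    |fstarTV σ q V - fstarTV σ p V| ≤
      M * ⨆ s'' : S, |∑ s ∈ univ.filter (fun s => V s'' ≤ V s), (q s - p s)| := by
  have hswap : (⨆ s'' : S, |∑ s ∈ univ.filter (fun s => V s'' ≤ V s), (p s - q s)|)
      = ⨆ s'' : S, |∑ s ∈ univ.filter (fun s => V s'' ≤ V s), (q s - p s)| := by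
    congr 1
    funext s''
    rw [show ∑ s ∈ univ.filter (fun s => V s'' ≤ V s), (p s - q s)
        = -∑ s ∈ univ.filter (fun s => V s'' ≤ V s), (q s - p s) by
      rw [← Finset.sum_neg_distrib]; exact Finset.sum_congr rfl (fun s _ => by ring)]
    exact abs_neg _
  rw [abs_sub_le_iff]
  constructor
  · linarith [fstar_le σ M hσ hM V hV0 hVM p q hp]
  · have := fstar_le σ M hσ hM V hV0 hVM q p hq
    rw [hswap] at this
    linarith
end fstar

lemma subfamily_indep {Ω : Type*} [MeasurableSpace Ω] {μ : Measure Ω}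
    {S A : Type*} [MeasurableSpace S] {n : ℕ} (X : S × A → Fin n → Ω → S)
    (h : iIndepFun (fun q : (S × A) × Fin n => X q.1 q.2) μ)
    (sa : S × A) :
    iIndepFun (fun i : Fin n => X sa i) μ := by
  classical
  rw [iIndepFun_iff_measure_inter_preimage_eq_mul] at h ⊢
  intro T sets hsets
  set emb : Fin n ↪ (S × A) × Fin n := ⟨fun i => (sa, i), fun a b hab => by
    simpa using congrArg Prod.snd hab⟩ with hemb
  set sets' : (S × A) × Fin n → Set S := fun q => if q.1 = sa then sets q.2 else Set.univ
    with hsets'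
  have hmeas' : ∀ q, q ∈ T.map emb → MeasurableSet (sets' q) := by
    intro q hq
    obtain ⟨i, hi, rfl⟩ := Finset.mem_map.1 hq
    show MeasurableSet (if sa = sa then sets i else Set.univ)
    rw [if_pos rfl]; exact hsets i hi
  have key := h (T.map emb) hmeas'
  have hinter : (⋂ q ∈ T.map emb, X q.1 q.2 ⁻¹' sets' q)
      = ⋂ i ∈ T, X sa i ⁻¹' sets i := by
    ext ω
    simp only [Set.mem_iInter, Finset.mem_map, hemb, Function.Embedding.coeFn_mk]
    constructor
    · intro hq i hi
      have := hq (sa, i) ⟨i, hi, rfl⟩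
      simpa [hsets'] using this
    · rintro hω q ⟨i, hi, rfl⟩
      show X sa i ω ∈ (if sa = sa then sets i else Set.univ)
      rw [if_pos rfl]; exact hω i hi
  have hprod : ∏ q ∈ T.map emb, μ (X q.1 q.2 ⁻¹' sets' q)
      = ∏ i ∈ T, μ (X sa i ⁻¹' sets i) := by
    rw [Finset.prod_map]
    refine Finset.prod_congr rfl (fun i _ => by
      show μ (X sa i ⁻¹' (if sa = sa then sets i else Set.univ)) = _
      rw [if_pos rfl])
  rw [hinter, hprod] at key
  exact key

end Aux



set_option maxHeartbeats 1000000 in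
/-- Expected uniform bias of empirical total-variation dual values. -/
theorem tv_expected_uniform_bias
    {S A : Type*} [Fintype S] [Fintype A] [Nonempty S] [Nonempty A] [DecidableEq S]
    [MeasurableSpace S] [MeasurableSingletonClass S]
    {Ω : Type*} [MeasurableSpace Ω] (μ : Measure Ω) [IsProbabilityMeasure μ]
    (σ : ℝ) (hσ : 0 ≤ σ)
    (rmax : ℝ) (hrmax : 0 < rmax)
    (γ : ℝ) (hγ0 : 0 ≤ γ) (hγ1 : γ < 1)
    (V : S → ℝ) (hV : ∀ s, 0 ≤ V s ∧ V s ≤ rmax / (1 - γ))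
    (p : S × A → S → ℝ) (hp : ∀ sa, IsPmf (p sa))
    (m : ℕ) (n : ℕ) (hn : n = 2 ^ (m + 1))
    (hnlog : 2 * (m + 1) * Real.log 2
        + Real.log (18 * Fintype.card S * Fintype.card A) ≤ n)
    (X : S × A → Fin n → Ω → S) (hXmeas : ∀ sa i, Measurable (X sa i))
    (hXindep : iIndepFun
        (fun q : (S × A) × Fin n => X q.1 q.2) μ)
    (hXlaw : ∀ sa i s', μ (X sa i ⁻¹' {s'}) = ENNReal.ofReal (p sa s')) :
    (∫ ω, (⨆ sa : S × A,
        |fstarTV σ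
            (fun s => (((Finset.univ.filter (fun i => X sa i ω = s)).card : ℝ) / n)) V
          - fstarTV σ (p sa) V|) ∂μ)
      ≤ (rmax / (1 - γ)) * (2 : ℝ) ^ (-(((m : ℝ) + 1) / 2)) *
          ((2 : ℝ) ^ (-(((m : ℝ) + 1) / 2))
            + 3 * Real.sqrt (2 * (m + 1) * Real.log 2
                + Real.log (18 * Fintype.card S * Fintype.card A))) := by
  classical
  have hnpos : 0 < n := by rw [hn]; positivity
  set M := rmax / (1 - γ) with hM
  have hMpos : 0 < M := div_pos hrmax (by linarith)
  set L := 2 * ((m : ℝ) + 1) * Real.log 2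
      + Real.log (18 * (Fintype.card S : ℝ) * (Fintype.card A : ℝ)) with hL
  set nR := (n : ℝ) with hnR
  have hnRpos : 0 < nR := by rw [hnR]; exact_mod_cast hnpos
  have hnR2 : (2:ℝ) ≤ nR := by
    rw [hnR, hn]
    have : (2:ℕ)^1 ≤ 2^(m+1) := Nat.pow_le_pow_right (by norm_num) (by omega)
    exact_mod_cast this
  have hcS : (1:ℝ) ≤ Fintype.card S := by exact_mod_cast Fintype.card_pos
  have hcA : (1:ℝ) ≤ Fintype.card A := by exact_mod_cast Fintype.card_pos
  have hL0 : 0 ≤ L := by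
    have h1 : 0 ≤ Real.log 2 := Real.log_nonneg (by norm_num)
    have h2 : 0 ≤ Real.log (18 * (Fintype.card S : ℝ) * (Fintype.card A : ℝ)) :=
      Real.log_nonneg (by nlinarith)
    have : (0:ℝ) ≤ (m:ℝ) := Nat.cast_nonneg m
    positivity
  have hexpL : Real.exp L = nR^2 * (18 * (Fintype.card S : ℝ) * (Fintype.card A : ℝ)) := by
    rw [hL, Real.exp_add,
      Real.exp_log (by nlinarith : (0:ℝ) < 18 * (Fintype.card S : ℝ) * (Fintype.card A : ℝ))]
    congr 1
    rw [show 2 * ((m : ℝ) + 1) * Real.log 2 = ((2 * (m + 1) : ℕ) : ℝ) * Real.log 2 by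
      push_cast; ring]
    rw [Real.exp_nat_mul, Real.exp_log two_pos, hnR, hn]
    rw [show 2 * (m + 1) = (m + 1) * 2 from by ring, pow_mul]
    push_cast
    ring
  set t0 := 3 * Real.sqrt (L / nR) with ht0
  have ht00 : 0 ≤ t0 := by positivity
  set B : S → Finset S := fun s'' => univ.filter (fun s => V s'' ≤ V s) with hB
  set P : (S × A) × S → ℝ := fun j => ∑ s ∈ B j.2, p j.1 s with hPdef
  set Sh : (S × A) × S → Ω → ℝ :=
    fun j ω => (∑ i, (if X j.1 i ω ∈ B j.2 then (1:ℝ) else 0)) / nR with hShdef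
  have hP0 : ∀ j, 0 ≤ P j := fun j => Finset.sum_nonneg (fun s _ => (hp j.1).1 s)
  have hP1 : ∀ j, P j ≤ 1 := by
    intro j
    rw [hPdef, ← (hp j.1).2]
    exact Finset.sum_le_sum_of_subset_of_nonneg (Finset.subset_univ _)
      (fun s _ _ => (hp j.1).1 s)
  have hSh01 : ∀ j ω, 0 ≤ Sh j ω ∧ Sh j ω ≤ 1 := by
    intro j ω
    have h0 : 0 ≤ ∑ i, (if X j.1 i ω ∈ B j.2 then (1:ℝ) else 0) :=
      Finset.sum_nonneg fun i _ => by positivity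
    have h1 : ∑ i, (if X j.1 i ω ∈ B j.2 then (1:ℝ) else 0) ≤ nR := by
      calc ∑ i, (if X j.1 i ω ∈ B j.2 then (1:ℝ) else 0)
          ≤ ∑ _i : Fin n, (1:ℝ) := Finset.sum_le_sum (fun i _ => by split <;> norm_num)
      _ = nR := by simp [hnR]
    exact ⟨div_nonneg h0 hnRpos.le, div_le_one_of_le₀ h1 hnRpos.le⟩
  have habs1 : ∀ j ω, |Sh j ω - P j| ≤ 1 := by
    intro j ω
    rw [abs_le]
    constructor <;> [linarith [(hSh01 j ω).1, hP1 j]; linarith [(hSh01 j ω).2, hP0 j]]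
  have hmeasSh : ∀ j, Measurable (Sh j) := by
    intro j
    apply Measurable.div_const
    exact Finset.measurable_sum _ (fun i _ =>
      (measurable_of_countable (fun s => if s ∈ B j.2 then (1:ℝ) else 0)).comp (hXmeas j.1 i))
  set bad : Set Ω := ⋃ j : (S × A) × S, {ω | t0 ≤ |Sh j ω - P j|} with hbad
  have hbadmeas : MeasurableSet bad := by
    refine MeasurableSet.iUnion (fun j => ?_)
    exact measurableSet_le measurable_const ((hmeasSh j).sub_const (P j)).abs
  have hqpmf : ∀ (sa : S × A) (ω : Ω),
      IsPmf (fun s => (((Finset.univ.filter (fun i => X sa i ω = s)).card : ℝ) / n)) := by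
    intro sa ω
    constructor
    · intro s; exact div_nonneg (Nat.cast_nonneg _) (Nat.cast_nonneg _)
    · rw [← Finset.sum_div, div_eq_one_iff_eq (by exact_mod_cast hnpos.ne' : (n:ℝ) ≠ 0)]
      have hsum : ∑ s : S, ((univ.filter (fun i => X sa i ω = s)).card) = n := by
        simp only [Finset.card_filter]
        rw [Finset.sum_comm]
        simp [Finset.sum_ite_eq]
      exact_mod_cast hsum
  have hShB : ∀ (j : (S × A) × S) (ω : Ω),
      ∑ s ∈ B j.2, ((((Finset.univ.filter (fun i => X j.1 i ω = s)).card : ℝ) / n) - p j.1 s)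
        = Sh j ω - P j := by
    intro j ω
    rw [Finset.sum_sub_distrib]
    have hNat : ∑ s ∈ B j.2, ((univ.filter (fun i => X j.1 i ω = s)).card)
        = ∑ i : Fin n, (if X j.1 i ω ∈ B j.2 then 1 else 0) := by
      simp only [Finset.card_filter]
      rw [Finset.sum_comm]
      exact Finset.sum_congr rfl (fun i _ => by rw [Finset.sum_ite_eq])
    have hcast : ∑ s ∈ B j.2, (((univ.filter (fun i => X j.1 i ω = s)).card : ℝ) / n)
        = Sh j ω := by
      rw [← Finset.sum_div]
      rw [hShdef]
      simp only
      rw [← hnR]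
      congr 1
      have := congrArg (fun k : ℕ => (k : ℝ)) hNat
      push_cast at this
      convert this using 2
    rw [hcast, hPdef]
  have htail : ∀ j : (S × A) × S, μ {ω | t0 ≤ |Sh j ω - P j|}
      ≤ ENNReal.ofReal (2 * Real.exp (-(nR * t0 ^ 2) / 4)) := by
    intro j
    set g : S → ℝ := fun s => (if s ∈ B j.2 then (1:ℝ) else 0) - P j with hg
    set Z : Fin n → Ω → ℝ := fun i => g ∘ X j.1 i with hZ
    have hZval : ∀ i ω, Z i ω = (if X j.1 i ω ∈ B j.2 then (1:ℝ) else 0) - P j := by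
      intro i ω; rfl
    have hZm : ∀ i, Measurable (Z i) :=
      fun i => (measurable_of_countable g).comp (hXmeas j.1 i)
    have hZb : ∀ i ω, |Z i ω| ≤ 1 := by
      intro i ω
      rw [hZval, abs_le]
      constructor <;> split <;> [linarith [hP1 j]; linarith [hP1 j]; linarith [hP0 j];
        linarith [hP0 j]]
    have hmean : ∀ i, ∫ ω, (if X j.1 i ω ∈ B j.2 then (1:ℝ) else 0) ∂μ = P j := by
      intro i
      have hind : (fun ω => if X j.1 i ω ∈ B j.2 then (1:ℝ) else 0)
          = Set.indicator (X j.1 i ⁻¹' (↑(B j.2) : Set S)) (fun _ => (1:ℝ)) := by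
        funext ω
        rw [Set.indicator_apply]
        simp [Set.mem_preimage]
      rw [hind, integral_indicator_const _ (hXmeas j.1 i ((B j.2).finite_toSet.measurableSet))]
      have hdecomp : X j.1 i ⁻¹' (↑(B j.2) : Set S) = ⋃ s ∈ B j.2, X j.1 i ⁻¹' {s} := by
        ext ω; simp
      have hμ : μ (X j.1 i ⁻¹' (↑(B j.2) : Set S)) = ENNReal.ofReal (P j) := by
        rw [hdecomp, measure_biUnion_finset ?_
          (fun s _ => hXmeas j.1 i (measurableSet_singleton s))]
        · rw [Finset.sum_congr rfl (fun s _ => hXlaw j.1 i s),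
            ← ENNReal.ofReal_sum_of_nonneg (fun s _ => (hp j.1).1 s), hPdef]
        · intro a ha b hb hab
          refine Set.disjoint_left.2 (fun ω h1 h2 => hab ?_)
          simp only [Set.mem_preimage, Set.mem_singleton_iff] at h1 h2
          rw [← h1, ← h2]
      rw [measureReal_def, hμ, ENNReal.toReal_ofReal (hP0 j), smul_eq_mul, mul_one]
    have hZ0 : ∀ i, ∫ ω, Z i ω ∂μ = 0 := by
      intro i
      have : (fun ω => Z i ω)
          = fun ω => (if X j.1 i ω ∈ B j.2 then (1:ℝ) else 0) - P j := by
        funext ω; exact hZval i ω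
      rw [this, integral_sub ?_ (integrable_const _), hmean, integral_const]
      · simp
      · refine integrable_of_bdd ((measurable_of_countable
          (fun s => if s ∈ B j.2 then (1:ℝ) else 0)).comp (hXmeas j.1 i)) 1 (fun ω => ?_)
        show |if X j.1 i ω ∈ B j.2 then (1:ℝ) else 0| ≤ 1
        split <;> norm_num
    have hZindep : iIndepFun Z μ :=
      (subfamily_indep X hXindep j.1).comp (fun _ => g) (fun _ => measurable_of_countable g)
    have hZsum : ∀ ω, (∑ i, Z i ω) / nR = Sh j ω - P j := by
      intro ω
      have : ∑ i, Z i ω = (∑ i, (if X j.1 i ω ∈ B j.2 then (1:ℝ) else 0)) - nR * P j := by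
        rw [Finset.sum_congr rfl (fun i _ => hZval i ω), Finset.sum_sub_distrib]
        congr 1
        rw [Finset.sum_const, Finset.card_univ, Fintype.card_fin, nsmul_eq_mul, hnR]
      rw [this, sub_div, hShdef]
      congr 1
      rw [mul_comm, mul_div_assoc, div_self hnRpos.ne', mul_one]
    have hup : (μ {ω | t0 ≤ Sh j ω - P j}).toReal ≤ Real.exp (-(nR * t0 ^ 2) / 4) := by
      have h := chernoff_sum μ n hnpos Z hZm hZb hZ0 hZindep t0 ht00
      have hset : {ω | t0 ≤ (∑ i, Z i ω) / (n:ℝ)} = {ω | t0 ≤ Sh j ω - P j} := by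
        ext ω
        rw [Set.mem_setOf_eq, Set.mem_setOf_eq, ← hZsum]
      rw [hset] at h
      exact h
    have hdn : (μ {ω | t0 ≤ P j - Sh j ω}).toReal ≤ Real.exp (-(nR * t0 ^ 2) / 4) := by
      have h := chernoff_sum μ n hnpos (fun k => -(Z k)) (fun i => (hZm i).neg)
        (fun i ω => by
          show |-(Z i ω)| ≤ 1
          rw [abs_neg]; exact hZb i ω)
        (fun i => by
          show (∫ ω, -(Z i ω) ∂μ) = 0
          rw [integral_neg, hZ0 i, neg_zero])
        (hZindep.comp (fun _ => (fun x : ℝ => -x)) (fun _ => measurable_neg)) t0 ht00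
      have hset : {ω | t0 ≤ (∑ i, (fun k => -(Z k)) i ω) / (n:ℝ)}
          = {ω | t0 ≤ P j - Sh j ω} := by
        ext ω
        rw [Set.mem_setOf_eq, Set.mem_setOf_eq]
        have hneg : ∑ i, (fun k => -(Z k)) i ω = -∑ i, Z i ω := by
          simp
        rw [hneg, neg_div]
        have := hZsum ω
        constructor <;> intro h' <;> [nlinarith [this]; nlinarith [this]]
      rw [hset] at h
      exact h
    have hsub : {ω | t0 ≤ |Sh j ω - P j|}
        ⊆ {ω | t0 ≤ Sh j ω - P j} ∪ {ω | t0 ≤ P j - Sh j ω} := by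
      intro ω hω
      rw [Set.mem_setOf_eq] at hω
      rcases le_abs.1 hω with h | h
      · exact Or.inl h
      · exact Or.inr (by simpa [neg_sub] using h)
    calc μ {ω | t0 ≤ |Sh j ω - P j|}
        ≤ μ ({ω | t0 ≤ Sh j ω - P j} ∪ {ω | t0 ≤ P j - Sh j ω}) := measure_mono hsub
    _ ≤ μ {ω | t0 ≤ Sh j ω - P j} + μ {ω | t0 ≤ P j - Sh j ω} := measure_union_le _ _
    _ ≤ ENNReal.ofReal (Real.exp (-(nR * t0 ^ 2) / 4))
          + ENNReal.ofReal (Real.exp (-(nR * t0 ^ 2) / 4)) := by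
        refine add_le_add ?_ ?_ <;>
        · rw [← ENNReal.ofReal_toReal (measure_ne_top μ _)]
          exact ENNReal.ofReal_le_ofReal (by assumption)
    _ = ENNReal.ofReal (2 * Real.exp (-(nR * t0 ^ 2) / 4)) := by
        rw [← ENNReal.ofReal_add (Real.exp_pos _).le (Real.exp_pos _).le]
        congr 1; ring
  have hbadle : (μ bad).toReal ≤ 1 / nR := by
    have hcard : ((Fintype.card ((S × A) × S) : ℝ))
        = (Fintype.card S : ℝ) * (Fintype.card A : ℝ) * (Fintype.card S : ℝ) := by
      simp [Fintype.card_prod]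
    have h1 : μ bad ≤ ∑' j : (S × A) × S, μ {ω | t0 ≤ |Sh j ω - P j|} := measure_iUnion_le _
    rw [tsum_fintype] at h1
    have h2 : μ bad ≤ ENNReal.ofReal
        (∑ _j : (S × A) × S, 2 * Real.exp (-(nR * t0 ^ 2) / 4)) := by
      refine h1.trans ?_
      rw [ENNReal.ofReal_sum_of_nonneg (fun j _ => by positivity)]
      exact Finset.sum_le_sum (fun j _ => htail j)
    have h3 := ENNReal.toReal_le_of_le_ofReal
      (Finset.sum_nonneg (fun j _ => by positivity)) h2
    refine h3.trans ?_
    rw [Finset.sum_const, Finset.card_univ, nsmul_eq_mul, hcard]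
    -- arithmetic
    have hsq : t0 ^ 2 = 9 * (L / nR) := by
      rw [ht0, mul_pow, Real.sq_sqrt (by positivity)]
      norm_num
    have hexpo : -(nR * t0 ^ 2) / 4 = -(9 * L) / 4 := by
      rw [hsq]
      field_simp
    have he1 : Real.exp (-(nR * t0 ^ 2) / 4) ≤ Real.exp (-(2 * L)) := by
      rw [hexpo]
      exact Real.exp_le_exp.2 (by linarith)
    have he2 : Real.exp (-(2 * L))
        = 1 / (nR ^ 2 * (18 * (Fintype.card S : ℝ) * (Fintype.card A : ℝ))) ^ 2 := by
      rw [Real.exp_neg, two_mul, Real.exp_add, hexpL, one_div, sq]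
      ring_nf
    set cS := (Fintype.card S : ℝ)
    set cA := (Fintype.card A : ℝ)
    have hKpos : 0 < nR ^ 2 * (18 * cS * cA) := by positivity
    calc cS * cA * cS * (2 * Real.exp (-(nR * t0 ^ 2) / 4))
        ≤ cS * cA * cS * (2 * Real.exp (-(2 * L))) := by
          have : (0:ℝ) ≤ cS * cA * cS := by positivity
          nlinarith [he1]
    _ = cS * cA * cS * 2 / (nR ^ 2 * (18 * cS * cA)) ^ 2 := by rw [he2]; ring
    _ ≤ 1 / nR := by
        rw [div_le_div_iff₀ (by positivity) hnRpos]
        have h4 : (nR ^ 2 * (18 * cS * cA)) ^ 2 = 324 * nR ^ 4 * cS ^ 2 * cA ^ 2 := by ring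
        rw [h4, one_mul]
        have hcS0 : (0:ℝ) ≤ cS := by linarith
        have hcA0 : (0:ℝ) ≤ cA := by linarith
        have hstep1 : cS * cA * cS * 2 * nR = 2 * nR * (cS^2 * cA) := by ring
        have hstep2 : cS^2 * cA ≤ cS^2 * cA^2 := by nlinarith
        have h8 : (8:ℝ) ≤ nR^3 := by nlinarith
        have hstep3 : 2 * nR ≤ 324 * nR^4 := by nlinarith [mul_le_mul_of_nonneg_left h8 hnRpos.le]
        calc cS * cA * cS * 2 * nR = 2 * nR * (cS^2 * cA) := hstep1
        _ ≤ 2 * nR * (cS^2 * cA^2) := by nlinarith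
        _ ≤ 324 * nR^4 * (cS^2 * cA^2) := by nlinarith [sq_nonneg (cS*cA)]
        _ = 324 * nR^4 * cS^2 * cA^2 := by ring
  have hpoint : ∀ ω, (⨆ sa : S × A,
      |fstarTV σ (fun s => (((Finset.univ.filter (fun i => X sa i ω = s)).card : ℝ) / n)) V
        - fstarTV σ (p sa) V|)
      ≤ M * t0 + Set.indicator bad (fun _ => M) ω := by
    intro ω
    have hsup : ∀ sa : S × A,
        |fstarTV σ (fun s => (((Finset.univ.filter (fun i => X sa i ω = s)).card : ℝ) / n)) V
          - fstarTV σ (p sa) V| ≤ M * ⨆ s'' : S, |Sh (sa, s'') ω - P (sa, s'')| := by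
      intro sa
      have hd := fstar_diff σ M hσ hMpos.le V (fun s => (hV s).1) (fun s => (hV s).2)
        (p sa) _ (hp sa) (hqpmf sa ω)
      refine hd.trans (le_of_eq ?_)
      congr 1
      exact congrArg (fun f : S → ℝ => ⨆ s'', f s'')
        (funext fun s'' => congrArg abs (hShB (sa, s'') ω))
    rcases Classical.em (ω ∈ bad) with hωb | hωg
    · rw [Set.indicator_of_mem hωb]
      refine ciSup_le (fun sa => (hsup sa).trans ?_)
      have hsuple : (⨆ s'' : S, |Sh (sa, s'') ω - P (sa, s'')|) ≤ 1 :=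
        ciSup_le (fun s'' => habs1 (sa, s'') ω)
      refine (mul_le_mul_of_nonneg_left hsuple hMpos.le).trans ?_
      have h2 : 0 ≤ M * t0 := mul_nonneg hMpos.le ht00
      linarith
    · rw [Set.indicator_of_notMem hωg, add_zero]
      refine ciSup_le (fun sa => (hsup sa).trans ?_)
      have hsuple : (⨆ s'' : S, |Sh (sa, s'') ω - P (sa, s'')|) ≤ t0 := by
        refine ciSup_le (fun s'' => ?_)
        by_contra hcon
        push_neg at hcon
        exact hωg (Set.mem_iUnion.2 ⟨(sa, s''), hcon.le⟩)
      exact mul_le_mul_of_nonneg_left hsuple hMpos.le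
  have hZ0 : ∀ ω, 0 ≤ (⨆ sa : S × A,
      |fstarTV σ (fun s => (((Finset.univ.filter (fun i => X sa i ω = s)).card : ℝ) / n)) V
        - fstarTV σ (p sa) V|) := by
    intro ω
    exact le_trans (abs_nonneg _)
      (le_ciSup (f := fun sa : S × A =>
        |fstarTV σ (fun s => (((Finset.univ.filter (fun i => X sa i ω = s)).card : ℝ) / n)) V
          - fstarTV σ (p sa) V|)
        (Set.Finite.bddAbove (Set.finite_range _)) (Classical.arbitrary (S × A)))
  have hint : Integrable (fun ω => M * t0 + Set.indicator bad (fun _ => M) ω) μ :=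
    (integrable_const _).add ((integrable_const M).indicator hbadmeas)
  have hmono := integral_mono_of_nonneg (Filter.Eventually.of_forall hZ0) hint
    (Filter.Eventually.of_forall hpoint)
  refine hmono.trans ?_
  rw [integral_add (integrable_const _) ((integrable_const M).indicator hbadmeas),
    integral_const, integral_indicator_const _ hbadmeas]
  simp only [measureReal_def, measure_univ, ENNReal.toReal_one, one_smul, smul_eq_mul, one_mul]
  have hr : (2:ℝ) ^ (-(((m:ℝ)+1)/2)) = (Real.sqrt nR)⁻¹ := by
    have h1 : nR = (2:ℝ) ^ (((m:ℝ) + 1)) := by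
      rw [hnR, hn, show ((m:ℝ)+1) = ((m+1 : ℕ):ℝ) by push_cast; ring, Real.rpow_natCast]
      push_cast; ring
    rw [h1, Real.sqrt_eq_rpow, ← Real.rpow_mul (by norm_num : (0:ℝ) ≤ 2),
      ← Real.rpow_neg (by norm_num : (0:ℝ) ≤ 2)]
    congr 1
    ring
  rw [hr]
  have hsn : 0 < Real.sqrt nR := Real.sqrt_pos.2 hnRpos
  have ht0eq : t0 = 3 * (Real.sqrt L / Real.sqrt nR) := by rw [ht0, Real.sqrt_div hL0]
  have hinv2 : (Real.sqrt nR)⁻¹ * (Real.sqrt nR)⁻¹ = 1 / nR := by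
    rw [← mul_inv, Real.mul_self_sqrt hnRpos.le, one_div]
  have hexpand : M * (Real.sqrt nR)⁻¹ * ((Real.sqrt nR)⁻¹ + 3 * Real.sqrt L)
      = M * ((Real.sqrt nR)⁻¹ * (Real.sqrt nR)⁻¹)
        + M * (3 * (Real.sqrt L * (Real.sqrt nR)⁻¹)) := by ring
  calc M * t0 + (μ bad).toReal * M
      ≤ M * (3 * (Real.sqrt L / Real.sqrt nR)) + (1/nR) * M :=
        add_le_add (le_of_eq (by rw [ht0eq]))
          (mul_le_mul_of_nonneg_right hbadle hMpos.le)
  _ = M * (Real.sqrt nR)⁻¹ * ((Real.sqrt nR)⁻¹ + 3 * Real.sqrt L) := by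
      rw [hexpand, hinv2, div_eq_mul_inv]
      ring
end

section
/- Second-moment bound on the multi-level Monte Carlo increment (total-variation case): Let S be a finite nonempty set, p a pmf on S, σ ≥ 0, r_max > 0, γ ∈ [0,1), and V : S → ℝ with 0 ≤ V(s) ≤ r_max/(1−γ) for all s. Let n ∈ ℕ satisfy 2^n ≥ (2n+1)·log 2 + log 18, and let X_1, …, X_{2^{n+1}} be i.i.d. samples from p. Let p̂ be the empirical pmf of all 2^{n+1} samples, p̂^E the empirical pmf of the 2^n even-indexed samples X_2, X_4, …, X_{2^{n+1}}, and p̂^O the empirical pmf of the 2^n odd-indexed samples X_1, X_3, …, X_{2^{n+1}−1}. Set δ = f*_TV(p̂, V) − (1/2)·f*_TV(p̂^E, V) − (1/2)·f*_TV(p̂^O, V) and C_n = 3·sqrt( (2n+1)·log 2 + log 18 ). Then E[δ²] ≤ 3·(C_n² + 1)·(r_max/(1−γ))²·2^{−n}. -/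
open Finset MeasureTheory ProbabilityTheory

/-- The empirical pmf of the samples `X 1, …, X k`. -/
noncomputable def empPmf {S : Type*} [Fintype S] [DecidableEq S] {Ω : Type*}
    (X : ℕ → Ω → S) (k : ℕ) (ω : Ω) : S → ℝ :=
  fun s => (((Finset.Icc 1 k).filter (fun i => X i ω = s)).card : ℝ) / k

lemma pairSum (k : ℕ) (f : ℕ → ℝ) :
    ∑ i ∈ Finset.Icc 1 (2 * k), f i
      = ∑ j ∈ Finset.Icc 1 k, (f (2 * j - 1) + f (2 * j)) := by
  induction k with
  | zero => simp
  | succ k ih =>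
      have h2 : 2 * (k + 1) = (2 * k + 1) + 1 := by ring
      rw [h2, Finset.sum_Icc_succ_top (by omega : 1 ≤ 2 * k + 1 + 1),
          Finset.sum_Icc_succ_top (by omega : 1 ≤ 2 * k + 1), ih,
          Finset.sum_Icc_succ_top (by omega : 1 ≤ k + 1)]
      have e1 : 2 * (k + 1) - 1 = 2 * k + 1 := by omega
      have e2 : 2 * (k + 1) = 2 * k + 1 + 1 := by omega
      rw [e1, e2]
      ring

section S
variable {S : Type*} [Fintype S] [DecidableEq S] {Ω : Type*}

lemma empPmf_eq_sum (X : ℕ → Ω → S) (k : ℕ) (ω : Ω) (s : S) :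
    empPmf X k ω s = (∑ i ∈ Finset.Icc 1 k, if X i ω = s then (1:ℝ) else 0) / k := by
  unfold empPmf
  congr 1
  rw [Finset.card_filter]
  push_cast
  rfl

lemma isPmf_empPmf (X : ℕ → Ω → S) (k : ℕ) (hk : 0 < k) (ω : Ω) :
    IsPmf (empPmf X k ω) := by
  constructor
  · intro s; unfold empPmf; positivity
  · have h := Finset.card_eq_sum_card_fiberwise
      (f := fun i => X i ω) (s := Finset.Icc 1 k) (t := Finset.univ)
      (fun x _ => Finset.mem_univ _)
    have h2 : ∑ s : S, empPmf X k ω s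
        = ((∑ s : S, ((Finset.Icc 1 k).filter (fun i => X i ω = s)).card : ℕ) : ℝ) / k := by
      unfold empPmf
      rw [← Finset.sum_div]
      push_cast
      rfl
    rw [h2, ← h, Nat.card_Icc]
    simp
    omega

lemma empPmf_half (X : ℕ → Ω → S) (k : ℕ) (ω : Ω) (s : S) :
    empPmf X (2 * k) ω s
      = (empPmf (fun i => X (2 * i)) k ω s + empPmf (fun i => X (2 * i - 1)) k ω s) / 2 := by
  rw [empPmf_eq_sum, empPmf_eq_sum, empPmf_eq_sum, pairSum, Finset.sum_add_distrib]
  push_cast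
  rcases Nat.eq_zero_or_pos k with hk | hk
  · simp [hk]
  have hk' : (k:ℝ) ≠ 0 := Nat.cast_ne_zero.2 (by omega)
  field_simp
  ring

lemma empPmf_expect (X : ℕ → Ω → S) (k : ℕ) (ω : Ω) (g : S → ℝ) :
    ∑ s, empPmf X k ω s * g s = (∑ i ∈ Finset.Icc 1 k, g (X i ω)) / k := by
  simp only [empPmf_eq_sum, div_mul_eq_mul_div]
  rw [← Finset.sum_div]
  congr 1
  have : ∀ s : S, (∑ i ∈ Finset.Icc 1 k, if X i ω = s then (1:ℝ) else 0) * g s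
      = ∑ i ∈ Finset.Icc 1 k, if X i ω = s then g s else 0 := by
    intro s
    rw [Finset.sum_mul]
    exact Finset.sum_congr rfl fun i _ => by split_ifs <;> simp
  simp only [this]
  rw [Finset.sum_comm]
  refine Finset.sum_congr rfl fun i _ => ?_
  rw [Finset.sum_ite_eq]
  simp

end S
section F
variable {S : Type*} [Fintype S] [Nonempty S] {σ : ℝ} {V : S → ℝ} {M : ℝ}

lemma fstarSet_nonempty (σ : ℝ) (q V : S → ℝ) :
    Set.Nonempty {x : ℝ | ∃ α : ℝ, 0 ≤ α ∧
      x = (∑ s, q s * min (V s) α) - σ * (α - ⨅ s, V s)} :=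
  ⟨_, 0, le_refl 0, rfl⟩

lemma fstarSet_bddAbove (hσ : 0 ≤ σ) {q : S → ℝ} (hq : IsPmf q)
    (hVM : ∀ s, V s ≤ M) :
    BddAbove {x : ℝ | ∃ α : ℝ, 0 ≤ α ∧
      x = (∑ s, q s * min (V s) α) - σ * (α - ⨅ s, V s)} := by
  refine ⟨M + σ * (⨅ s, V s), ?_⟩
  rintro x ⟨α, hα, rfl⟩
  have h1 : ∑ s, q s * min (V s) α ≤ M := by
    calc ∑ s, q s * min (V s) α ≤ ∑ s, q s * M :=
          Finset.sum_le_sum fun s _ =>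
            mul_le_mul_of_nonneg_left (le_trans (min_le_left _ _) (hVM s)) (hq.1 s)
      _ = M := by rw [← Finset.sum_mul, hq.2, one_mul]
  rw [mul_sub]
  have := mul_nonneg hσ hα
  linarith

/-- Pointwise bound on the MLMC increment for the TV dual value. -/
lemma delta_abs_le (hσ : 0 ≤ σ) {qE qO q : S → ℝ} (hE : IsPmf qE) (hO : IsPmf qO)
    (hmid : ∀ s, q s = (qE s + qO s) / 2) (hVM : ∀ s, V s ≤ M)
    {B : ℝ} (hB : ∀ α, 0 ≤ α → |∑ s, (qE s - qO s) * min (V s) α| ≤ B) :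
    |fstarTV σ q V - (1/2) * fstarTV σ qE V - (1/2) * fstarTV σ qO V| ≤ B / 2 := by
  have hq : IsPmf q := by
    constructor
    · intro s; rw [hmid s]; have := hE.1 s; have := hO.1 s; linarith
    · have : ∑ s, q s = ∑ s, (qE s + qO s) / 2 := Finset.sum_congr rfl fun s _ => hmid s
      rw [this, ← Finset.sum_div, Finset.sum_add_distrib, hE.2, hO.2]; norm_num
  have hmidE : ∀ α : ℝ, ∑ s, q s * min (V s) α
      = ((∑ s, qE s * min (V s) α) + ∑ s, qO s * min (V s) α) / 2 := by
    intro α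
    have h : ∑ s, q s * min (V s) α
        = ∑ s, (qE s * min (V s) α / 2 + qO s * min (V s) α / 2) :=
      Finset.sum_congr rfl fun s _ => by rw [hmid s]; ring
    rw [h, Finset.sum_add_distrib, ← Finset.sum_div, ← Finset.sum_div]
    ring
  have hD : ∀ α : ℝ, ∑ s, (qE s - qO s) * min (V s) α
      = (∑ s, qE s * min (V s) α) - ∑ s, qO s * min (V s) α := by
    intro α
    rw [← Finset.sum_sub_distrib]
    exact Finset.sum_congr rfl fun s _ => by ring
  have bddq := fstarSet_bddAbove hσ hq hVM
  have bddE := fstarSet_bddAbove hσ hE hVM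
  have bddO := fstarSet_bddAbove hσ hO hVM
  have hB0 : 0 ≤ B := le_trans (abs_nonneg _) (hB 0 (le_refl 0))
  -- upper bound : convexity
  have hup : fstarTV σ q V ≤ (1/2) * fstarTV σ qE V + (1/2) * fstarTV σ qO V := by
    apply csSup_le (fstarSet_nonempty σ q V)
    rintro x ⟨α, hα, rfl⟩
    have h1 : (∑ s, qE s * min (V s) α) - σ * (α - ⨅ s, V s) ≤ fstarTV σ qE V :=
      le_csSup bddE ⟨α, hα, rfl⟩
    have h2 : (∑ s, qO s * min (V s) α) - σ * (α - ⨅ s, V s) ≤ fstarTV σ qO V :=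
      le_csSup bddO ⟨α, hα, rfl⟩
    rw [hmidE α]
    linarith
  -- lower bounds
  have hlowE : fstarTV σ qE V ≤ fstarTV σ q V + B / 2 := by
    apply csSup_le (fstarSet_nonempty σ qE V)
    rintro x ⟨α, hα, rfl⟩
    have h1 : (∑ s, q s * min (V s) α) - σ * (α - ⨅ s, V s) ≤ fstarTV σ q V :=
      le_csSup bddq ⟨α, hα, rfl⟩
    have h2 := (abs_le.1 (hB α hα)).2
    rw [hD α] at h2
    have h3 := hmidE α
    linarith
  have hlowO : fstarTV σ qO V ≤ fstarTV σ q V + B / 2 := by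
    apply csSup_le (fstarSet_nonempty σ qO V)
    rintro x ⟨α, hα, rfl⟩
    have h1 : (∑ s, q s * min (V s) α) - σ * (α - ⨅ s, V s) ≤ fstarTV σ q V :=
      le_csSup bddq ⟨α, hα, rfl⟩
    have h2 := (abs_le.1 (hB α hα)).1
    rw [hD α] at h2
    have h3 := hmidE α
    linarith
  rw [abs_le]
  constructor <;> linarith

end F

lemma isFiniteIoc (M : ℝ) : IsFiniteMeasure (volume.restrict (Set.Ioc (0:ℝ) M)) :=
  ⟨by rw [Measure.restrict_apply_univ, Real.volume_Ioc]; exact ENNReal.ofReal_lt_top⟩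

lemma integrable_ite_lt (M w c : ℝ) :
    Integrable (fun t => if t < c then w else 0) (volume.restrict (Set.Ioc (0:ℝ) M)) := by
  haveI := isFiniteIoc M
  have h : (fun t : ℝ => if t < c then w else 0) = (Set.Iio c).indicator (fun _ => w) := by
    funext t; simp [Set.indicator_apply, Set.mem_Iio]
  rw [h]
  exact (integrable_const w).indicator measurableSet_Iio

lemma integral_ite_lt {M c : ℝ} (h0 : 0 ≤ c) (hcM : c ≤ M) :
    ∫ t, (if t < c then (1:ℝ) else 0) ∂(volume.restrict (Set.Ioc (0:ℝ) M)) = c := by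
  have h : (fun t : ℝ => if t < c then (1:ℝ) else 0)
      = (Set.Iio c).indicator (fun _ => (1:ℝ)) := by
    funext t; simp [Set.indicator_apply, Set.mem_Iio]
  rw [h, integral_indicator_const (1:ℝ) measurableSet_Iio, smul_eq_mul, mul_one,
    measureReal_def, Measure.restrict_apply measurableSet_Iio]
  have h2 : Set.Iio c ∩ Set.Ioc 0 M = Set.Ioo 0 c := by
    ext t
    simp only [Set.mem_inter_iff, Set.mem_Iio, Set.mem_Ioc, Set.mem_Ioo]
    constructor
    · rintro ⟨h1, h2, _⟩; exact ⟨h2, h1⟩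
    · rintro ⟨h1, h2⟩; exact ⟨h2, h1, le_trans h2.le hcM⟩
  rw [h2, Real.volume_Ioo, ENNReal.toReal_ofReal (by linarith)]
  ring

lemma sq_integral_abs_le {α : Type*} [MeasurableSpace α] (ν : Measure α) [IsFiniteMeasure ν]
    {f : α → ℝ} (hf : AEStronglyMeasurable f ν) {C : ℝ} (hC : ∀ x, |f x| ≤ C) :
    (∫ x, |f x| ∂ν) ^ 2 ≤ (ν Set.univ).toReal * ∫ x, (f x) ^ 2 ∂ν := by
  have h22 : (2:ℝ).HolderConjugate 2 := Real.holderConjugate_iff.mpr ⟨by norm_num, by norm_num⟩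
  have hmem : MemLp (fun x => |f x|) (ENNReal.ofReal 2) ν := by
    rw [show ENNReal.ofReal (2:ℝ) = 2 by norm_num]
    exact MemLp.of_bound hf.norm C (Filter.Eventually.of_forall fun x => by
      rw [Real.norm_eq_abs, abs_abs]; exact hC x)
  have hone : MemLp (fun _ : α => (1:ℝ)) (ENNReal.ofReal 2) ν := by
    rw [show ENNReal.ofReal (2:ℝ) = 2 by norm_num]; exact memLp_const 1
  have key := integral_mul_le_Lp_mul_Lq_of_nonneg h22
    (Filter.Eventually.of_forall fun x => abs_nonneg (f x))
    (Filter.Eventually.of_forall fun _ : α => zero_le_one) hmem hone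
  simp only [mul_one] at key
  have e1 : ∫ x, |f x| ^ (2:ℝ) ∂ν = ∫ x, (f x) ^ 2 ∂ν := by
    refine integral_congr_ae (Filter.Eventually.of_forall fun x => ?_)
    have h : |f x| ^ (2:ℝ) = |f x| ^ (2:ℕ) := by
      rw [← Real.rpow_natCast]; norm_num
    simp only [h, sq_abs]
  have e2 : ∫ x, (1:ℝ) ^ (2:ℝ) ∂ν = (ν Set.univ).toReal := by
    simp [Real.one_rpow, measureReal_def]
  rw [e1, e2] at key
  have hA : 0 ≤ ∫ x, (f x) ^ 2 ∂ν := integral_nonneg fun x => sq_nonneg _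
  have hB : (0:ℝ) ≤ (ν Set.univ).toReal := ENNReal.toReal_nonneg
  have h1 : (∫ x, (f x) ^ 2 ∂ν) ^ ((1:ℝ)/2) = Real.sqrt (∫ x, (f x) ^ 2 ∂ν) :=
    (Real.sqrt_eq_rpow _).symm
  have h2 : ((ν Set.univ).toReal) ^ ((1:ℝ)/2) = Real.sqrt ((ν Set.univ).toReal) :=
    (Real.sqrt_eq_rpow _).symm
  rw [h1, h2] at key
  calc (∫ x, |f x| ∂ν) ^ 2
      ≤ (Real.sqrt (∫ x, (f x) ^ 2 ∂ν) * Real.sqrt ((ν Set.univ).toReal)) ^ 2 :=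
        pow_le_pow_left₀ (integral_nonneg fun x => abs_nonneg _) key 2
    _ = (ν Set.univ).toReal * ∫ x, (f x) ^ 2 ∂ν := by
        rw [mul_pow, Real.sq_sqrt hA, Real.sq_sqrt hB]; ring
lemma law_integral {Ω S : Type*} [MeasurableSpace Ω] [Fintype S]
    [MeasurableSpace S] [MeasurableSingletonClass S]
    (μ : Measure Ω) [IsProbabilityMeasure μ] (p : S → ℝ) (hp0 : ∀ s, 0 ≤ p s)
    (Y : Ω → S) (hY : Measurable Y) (hlaw : ∀ s, μ (Y ⁻¹' {s}) = ENNReal.ofReal (p s))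
    (g : S → ℝ) :
    ∫ ω, g (Y ω) ∂μ = ∑ s, p s * g s := by
  have h : ∀ ω, g (Y ω) = ∑ s, (Y ⁻¹' {s}).indicator (fun _ => g s) ω := by
    intro ω
    rw [Finset.sum_eq_single (Y ω)]
    · simp [Set.indicator_apply]
    · intro b _ hb
      have : Y ω ≠ b := fun h => hb h.symm
      simp [Set.indicator_apply, this]
    · intro h; exact absurd (Finset.mem_univ _) h
  rw [integral_congr_ae (Filter.Eventually.of_forall h),
    integral_finset_sum _ (fun s _ =>
      (integrable_const (g s)).indicator (hY (measurableSet_singleton s)))]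
  refine Finset.sum_congr rfl fun s _ => ?_
  rw [integral_indicator_const (g s) (hY (measurableSet_singleton s)), measureReal_def, hlaw s,
    ENNReal.toReal_ofReal (hp0 s), smul_eq_mul]

lemma exp_sq_le {Ω S : Type*} [MeasurableSpace Ω] [Fintype S]
    [MeasurableSpace S] [MeasurableSingletonClass S]
    (μ : Measure Ω) [IsProbabilityMeasure μ] (p : S → ℝ) (hp : IsPmf p) (K : ℕ)
    (X : ℕ → Ω → S) (hXmeas : ∀ i, Measurable (X i))
    (hindep : ∀ i ∈ Finset.Icc 1 K, ∀ j ∈ Finset.Icc 1 K, i ≠ j →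
      IndepFun (X i) (X j) μ)
    (hlaw : ∀ i ∈ Finset.Icc 1 K, ∀ s, μ (X i ⁻¹' {s}) = ENNReal.ofReal (p s))
    (f : S → ℝ) (hf0 : ∀ s, 0 ≤ f s) (hf1 : ∀ s, f s ≤ 1)
    (ε : ℕ → ℝ) (hε : ∀ i, ε i = 1 ∨ ε i = -1)
    (hεsum : ∑ i ∈ Finset.Icc 1 K, ε i = 0) :
    ∫ ω, (∑ i ∈ Finset.Icc 1 K, ε i * f (X i ω)) ^ 2 ∂μ ≤ K := by
  have hfmeas : Measurable f := measurable_of_countable f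
  set m : ℝ := ∑ s, p s * f s with hm
  set v : ℝ := ∑ s, p s * (f s * f s) with hv
  have hYm : ∀ i, AEStronglyMeasurable (fun ω => f (X i ω)) μ := fun i =>
    (hfmeas.comp (hXmeas i)).aestronglyMeasurable
  have hYint : ∀ i, Integrable (fun ω => f (X i ω)) μ := fun i =>
    Integrable.mono' (integrable_const 1) (hYm i)
      (Filter.Eventually.of_forall fun ω => by
        rw [Real.norm_eq_abs, abs_of_nonneg (hf0 _)]; exact hf1 _)
  have hprod : ∀ i ∈ Finset.Icc 1 K, ∀ j ∈ Finset.Icc 1 K,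
      ∫ ω, f (X i ω) * f (X j ω) ∂μ = if i = j then v else m * m := by
    intro i hi j hj
    rcases eq_or_ne i j with h | h
    · subst h
      rw [if_pos rfl, hv]
      exact law_integral μ p hp.1 (X i) (hXmeas i) (hlaw i hi) (fun s => f s * f s)
    · rw [if_neg h]
      have hind : IndepFun (fun ω => f (X i ω)) (fun ω => f (X j ω)) μ :=
        (hindep i hi j hj h).comp hfmeas hfmeas
      have := hind.integral_mul_eq_mul_integral (hYint i).aestronglyMeasurable (hYint j).aestronglyMeasurable
      have heq : ∫ ω, f (X i ω) * f (X j ω) ∂μ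
          = (∫ ω, f (X i ω) ∂μ) * ∫ ω, f (X j ω) ∂μ := this
      rw [heq, law_integral μ p hp.1 (X i) (hXmeas i) (hlaw i hi) f,
        law_integral μ p hp.1 (X j) (hXmeas j) (hlaw j hj) f]
  have expand : ∀ ω, (∑ i ∈ Finset.Icc 1 K, ε i * f (X i ω)) ^ 2
      = ∑ i ∈ Finset.Icc 1 K, ∑ j ∈ Finset.Icc 1 K,
          (ε i * ε j) * (f (X i ω) * f (X j ω)) := by
    intro ω
    rw [sq, Finset.sum_mul_sum]
    exact Finset.sum_congr rfl fun i _ => Finset.sum_congr rfl fun j _ => by ring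
  have hTij : ∀ i j : ℕ, Integrable (fun ω => (ε i * ε j) * (f (X i ω) * f (X j ω))) μ := by
    intro i j
    exact (((hYint j).bdd_mul (c := 1) (hYm i)
      (Filter.Eventually.of_forall fun ω => by rw [Real.norm_eq_abs, abs_of_nonneg (hf0 _)]; exact hf1 _)).const_mul _)
  have hint : ∫ ω, (∑ i ∈ Finset.Icc 1 K, ε i * f (X i ω)) ^ 2 ∂μ
      = ∑ i ∈ Finset.Icc 1 K, ∑ j ∈ Finset.Icc 1 K,
          (ε i * ε j) * ∫ ω, f (X i ω) * f (X j ω) ∂μ := by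
    rw [integral_congr_ae (Filter.Eventually.of_forall expand),
      integral_finset_sum _ (fun i _ => integrable_finset_sum _ (fun j _ => hTij i j))]
    refine Finset.sum_congr rfl fun i _ => ?_
    rw [integral_finset_sum _ (fun j _ => hTij i j)]
    exact Finset.sum_congr rfl fun j _ => integral_const_mul _ _
  rw [hint]
  have hsplit : ∀ i ∈ Finset.Icc 1 K, ∀ j ∈ Finset.Icc 1 K,
      (ε i * ε j) * ∫ ω, f (X i ω) * f (X j ω) ∂μ
      = (ε i * (m * m)) * ε j + (if i = j then v - m * m else 0) := by
    intro i hi j hj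
    rw [hprod i hi j hj]
    rcases eq_or_ne i j with h | h
    · subst h
      rw [if_pos rfl, if_pos rfl]
      rcases hε i with h1 | h1 <;> rw [h1] <;> ring
    · rw [if_neg h, if_neg h]; ring
  calc ∑ i ∈ Finset.Icc 1 K, ∑ j ∈ Finset.Icc 1 K,
        (ε i * ε j) * ∫ ω, f (X i ω) * f (X j ω) ∂μ
      = ∑ i ∈ Finset.Icc 1 K, ∑ j ∈ Finset.Icc 1 K,
        ((ε i * (m * m)) * ε j + (if i = j then v - m * m else 0)) := by
        exact Finset.sum_congr rfl fun i hi => Finset.sum_congr rfl fun j hj =>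
          hsplit i hi j hj
    _ = ∑ i ∈ Finset.Icc 1 K, (v - m * m) := by
        refine Finset.sum_congr rfl fun i hi => ?_
        rw [Finset.sum_add_distrib, ← Finset.mul_sum, hεsum, mul_zero, zero_add,
          Finset.sum_ite_eq, if_pos hi]
    _ = K * (v - m * m) := by
        rw [Finset.sum_const, Nat.card_Icc]
        simp [nsmul_eq_mul]
    _ ≤ K := by
      have hv1 : v ≤ 1 := by
        rw [hv]
        calc ∑ s, p s * (f s * f s) ≤ ∑ s, p s := by
              refine Finset.sum_le_sum fun s _ => ?_
              have := mul_le_one₀ (hf1 s) (hf0 s) (hf1 s)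
              nlinarith [hp.1 s]
          _ = 1 := hp.2
      have hm2 : 0 ≤ m * m := mul_self_nonneg m
      have hK : (0:ℝ) ≤ K := Nat.cast_nonneg K
      nlinarith

lemma measurable_empPmf {S : Type*} [Fintype S] [DecidableEq S] [MeasurableSpace S]
    [MeasurableSingletonClass S] {Ω : Type*} [MeasurableSpace Ω]
    (X : ℕ → Ω → S) (hX : ∀ i, Measurable (X i)) (k : ℕ) (s : S) :
    Measurable (fun ω => empPmf X k ω s) := by
  simp only [empPmf_eq_sum]
  apply Measurable.div_const
  apply Finset.measurable_sum
  intro i _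
  exact Measurable.ite (hX i (measurableSet_singleton s)) measurable_const measurable_const

/-- Second-moment bound on the multi-level Monte Carlo increment
(total-variation case). -/
theorem mlmc_increment_second_moment_tv
    {S : Type*} [Fintype S] [Nonempty S] [DecidableEq S]
    [MeasurableSpace S] [MeasurableSingletonClass S]
    {Ω : Type*} [MeasurableSpace Ω] (μ : Measure Ω) [IsProbabilityMeasure μ]
    (p : S → ℝ) (hp : IsPmf p)
    (σ : ℝ) (hσ : 0 ≤ σ)
    (rmax : ℝ) (hrmax : 0 < rmax)
    (γ : ℝ) (hγ0 : 0 ≤ γ) (hγ1 : γ < 1)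
    (V : S → ℝ) (hV : ∀ s, 0 ≤ V s ∧ V s ≤ rmax / (1 - γ))
    (n : ℕ)
    (hn : (2 * n + 1) * Real.log 2 + Real.log 18 ≤ (2 : ℝ) ^ n)
    (X : ℕ → Ω → S) (hXmeas : ∀ i, Measurable (X i))
    (hXindep : iIndepFun
        (fun i : Fin (2 ^ (n + 1)) => X (i + 1)) μ)
    (hXlaw : ∀ i ∈ Finset.Icc 1 (2 ^ (n + 1)), ∀ s, μ (X i ⁻¹' {s}) = ENNReal.ofReal (p s)) :
    (∫ ω, (fstarTV σ (empPmf X (2 ^ (n + 1)) ω) V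
        - (1 / 2) * fstarTV σ (empPmf (fun i => X (2 * i)) (2 ^ n) ω) V
        - (1 / 2) * fstarTV σ (empPmf (fun i => X (2 * i - 1)) (2 ^ n) ω) V) ^ 2 ∂μ)
      ≤ 3 * ((3 * Real.sqrt ((2 * n + 1) * Real.log 2 + Real.log 18)) ^ 2 + 1)
          * (rmax / (1 - γ)) ^ 2 * (2 : ℝ) ^ (-(n : ℝ)) := by
  classical
  have hγ : (0:ℝ) < 1 - γ := by linarith
  set M : ℝ := rmax / (1 - γ) with hMdef
  have hM : 0 < M := div_pos hrmax hγ
  have hc : 2 ^ (n + 1) = 2 * 2 ^ n := by rw [pow_succ, Nat.mul_comm]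
  have hk : 0 < 2 ^ n := Nat.pow_pos (by norm_num)
  have hkR : (0:ℝ) < ((2:ℕ) ^ n : ℕ) := by positivity
  set ν : Measure ℝ := volume.restrict (Set.Ioc (0:ℝ) M) with hν
  haveI : IsFiniteMeasure ν := isFiniteIoc M
  have hνuniv : (ν Set.univ).toReal = M := by
    rw [hν, Measure.restrict_apply_univ, Real.volume_Ioc, sub_zero,
      ENNReal.toReal_ofReal hM.le]
  -- empirical pmfs
  have hEpmf : ∀ ω : Ω, IsPmf (empPmf (fun i => X (2 * i)) (2 ^ n) ω) :=
    fun ω => isPmf_empPmf _ _ hk ω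
  have hOpmf : ∀ ω : Ω, IsPmf (empPmf (fun i => X (2 * i - 1)) (2 ^ n) ω) :=
    fun ω => isPmf_empPmf _ _ hk ω
  have hmid : ∀ ω : Ω, ∀ s, empPmf X (2 ^ (n + 1)) ω s
      = (empPmf (fun i => X (2 * i)) (2 ^ n) ω s
          + empPmf (fun i => X (2 * i - 1)) (2 ^ n) ω s) / 2 := by
    intro ω s
    rw [hc]
    exact empPmf_half X (2 ^ n) ω s
  -- the H process
  set H : ℝ → Ω → ℝ := fun t ω => ∑ s,
      (empPmf (fun i => X (2 * i)) (2 ^ n) ω s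
        - empPmf (fun i => X (2 * i - 1)) (2 ^ n) ω s)
      * (if t < V s then (1:ℝ) else 0) with hH
  have hHint : ∀ ω, Integrable (fun t => H t ω) ν := by
    intro ω
    have h : (fun t => H t ω) = fun t => ∑ s, (if t < V s then
        (empPmf (fun i => X (2 * i)) (2 ^ n) ω s
          - empPmf (fun i => X (2 * i - 1)) (2 ^ n) ω s) else 0) := by
      funext t
      simp only [hH]
      exact Finset.sum_congr rfl fun s _ => by split_ifs <;> ring
    rw [h]
    exact integrable_finset_sum _ fun s _ => integrable_ite_lt M _ _
  have hHbdd : ∀ t ω, |H t ω| ≤ 2 := by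
    intro t ω
    simp only [hH]
    calc |∑ s, (empPmf (fun i => X (2 * i)) (2 ^ n) ω s
            - empPmf (fun i => X (2 * i - 1)) (2 ^ n) ω s) * (if t < V s then (1:ℝ) else 0)|
        ≤ ∑ s, |(empPmf (fun i => X (2 * i)) (2 ^ n) ω s
            - empPmf (fun i => X (2 * i - 1)) (2 ^ n) ω s) * (if t < V s then (1:ℝ) else 0)| :=
          Finset.abs_sum_le_sum_abs _ _
      _ ≤ ∑ s, (empPmf (fun i => X (2 * i)) (2 ^ n) ω s
            + empPmf (fun i => X (2 * i - 1)) (2 ^ n) ω s) := by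
          refine Finset.sum_le_sum fun s _ => ?_
          have h1 := (hEpmf ω).1 s
          have h2 := (hOpmf ω).1 s
          rw [abs_mul]
          have hite : |if t < V s then (1:ℝ) else 0| ≤ 1 := by split_ifs <;> norm_num
          have habs : |empPmf (fun i => X (2 * i)) (2 ^ n) ω s
              - empPmf (fun i => X (2 * i - 1)) (2 ^ n) ω s|
              ≤ empPmf (fun i => X (2 * i)) (2 ^ n) ω s
                + empPmf (fun i => X (2 * i - 1)) (2 ^ n) ω s :=
            abs_le.2 ⟨by linarith, by linarith⟩
          nlinarith [abs_nonneg (empPmf (fun i => X (2 * i)) (2 ^ n) ω s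
            - empPmf (fun i => X (2 * i - 1)) (2 ^ n) ω s)]
      _ = 2 := by rw [Finset.sum_add_distrib, (hEpmf ω).2, (hOpmf ω).2]; norm_num
  -- sup-alpha bound
  have hDa : ∀ ω : Ω, ∀ α : ℝ, 0 ≤ α →
      |∑ s, (empPmf (fun i => X (2 * i)) (2 ^ n) ω s
          - empPmf (fun i => X (2 * i - 1)) (2 ^ n) ω s) * min (V s) α|
        ≤ ∫ t, |H t ω| ∂ν := by
    intro ω α hα
    have step1 : ∑ s, (empPmf (fun i => X (2 * i)) (2 ^ n) ω s
          - empPmf (fun i => X (2 * i - 1)) (2 ^ n) ω s) * min (V s) α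
        = ∫ t, (∑ s, if t < min (V s) α then
            (empPmf (fun i => X (2 * i)) (2 ^ n) ω s
              - empPmf (fun i => X (2 * i - 1)) (2 ^ n) ω s) else 0) ∂ν := by
      rw [integral_finset_sum _ (fun s _ => integrable_ite_lt M _ _)]
      refine Finset.sum_congr rfl fun s _ => ?_
      have hrep : min (V s) α
          = ∫ t, (if t < min (V s) α then (1:ℝ) else 0) ∂ν :=
        (integral_ite_lt (le_min (hV s).1 hα) (min_le_of_left_le (hV s).2)).symm
      conv_lhs => rw [hrep]
      rw [← integral_const_mul]
      refine integral_congr_ae (Filter.Eventually.of_forall fun t => ?_)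
      simp only []
      split_ifs <;> ring
    rw [step1]
    have hGint : Integrable (fun t => ∑ s, if t < min (V s) α then
        (empPmf (fun i => X (2 * i)) (2 ^ n) ω s
          - empPmf (fun i => X (2 * i - 1)) (2 ^ n) ω s) else 0) ν :=
      integrable_finset_sum _ fun s _ => integrable_ite_lt M _ _
    have hGH : ∀ t : ℝ, |∑ s, if t < min (V s) α then
        (empPmf (fun i => X (2 * i)) (2 ^ n) ω s
          - empPmf (fun i => X (2 * i - 1)) (2 ^ n) ω s) else 0| ≤ |H t ω| := by
      intro t
      have h : (∑ s, if t < min (V s) α then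
          (empPmf (fun i => X (2 * i)) (2 ^ n) ω s
            - empPmf (fun i => X (2 * i - 1)) (2 ^ n) ω s) else 0)
          = if t < α then H t ω else 0 := by
        rcases lt_or_ge t α with h | h
        · rw [if_pos h]
          simp only [hH]
          refine Finset.sum_congr rfl fun s _ => ?_
          rcases lt_or_ge t (V s) with h2 | h2
          · rw [if_pos (lt_min h2 h), if_pos h2]; ring
          · rw [if_neg (fun hcon => absurd (lt_min_iff.1 hcon).1 (not_lt.2 h2)),
              if_neg (not_lt.2 h2)]; ring
        · rw [if_neg (not_lt.2 h)]
          refine Finset.sum_eq_zero fun s _ => ?_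
          rw [if_neg (fun hcon => absurd (lt_min_iff.1 hcon).2 (not_lt.2 h))]
      rw [h]
      split_ifs
      · exact le_refl _
      · simp
    calc |∫ t, (∑ s, if t < min (V s) α then
            (empPmf (fun i => X (2 * i)) (2 ^ n) ω s
              - empPmf (fun i => X (2 * i - 1)) (2 ^ n) ω s) else 0) ∂ν|
        ≤ ∫ t, |∑ s, if t < min (V s) α then
            (empPmf (fun i => X (2 * i)) (2 ^ n) ω s
              - empPmf (fun i => X (2 * i - 1)) (2 ^ n) ω s) else 0| ∂ν := by
          have := norm_integral_le_integral_norm (μ := ν) (fun t => ∑ s, if t < min (V s) α then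
            (empPmf (fun i => X (2 * i)) (2 ^ n) ω s
              - empPmf (fun i => X (2 * i - 1)) (2 ^ n) ω s) else 0)
          simpa [Real.norm_eq_abs] using this
      _ ≤ ∫ t, |H t ω| ∂ν := integral_mono hGint.abs (hHint ω).abs hGH
  -- pointwise delta bound
  have hdelta : ∀ ω : Ω,
      |fstarTV σ (empPmf X (2 ^ (n + 1)) ω) V
        - (1 / 2) * fstarTV σ (empPmf (fun i => X (2 * i)) (2 ^ n) ω) V
        - (1 / 2) * fstarTV σ (empPmf (fun i => X (2 * i - 1)) (2 ^ n) ω) V|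
        ≤ (∫ t, |H t ω| ∂ν) / 2 :=
    fun ω => delta_abs_le hσ (hEpmf ω) (hOpmf ω) (hmid ω) (fun s => (hV s).2) (hDa ω)
  -- pairwise independence
  have hpair : ∀ i ∈ Finset.Icc 1 (2 ^ (n + 1)), ∀ j ∈ Finset.Icc 1 (2 ^ (n + 1)), i ≠ j →
      IndepFun (X i) (X j) μ := by
    intro i hi j hj hij
    rw [Finset.mem_Icc] at hi hj
    have h1 : i - 1 < 2 ^ (n + 1) := by omega
    have h2 : j - 1 < 2 ^ (n + 1) := by omega
    have hne : (⟨i - 1, h1⟩ : Fin (2 ^ (n + 1))) ≠ ⟨j - 1, h2⟩ := by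
      intro h
      apply hij
      have := Fin.mk.injEq (i - 1) h1 (j - 1) h2 ▸ h
      have h3 : i - 1 = j - 1 := Fin.mk.inj_iff.1 h
      omega
    have H := hXindep.indepFun hne
    have e1 : i - 1 + 1 = i := by omega
    have e2 : j - 1 + 1 = j := by omega
    simpa [e1, e2] using H
  -- sum of signs vanishes
  have hεsum : ∑ i ∈ Finset.Icc 1 (2 ^ (n + 1)), (if Even i then (1:ℝ) else -1) = 0 := by
    rw [hc, pairSum]
    refine Finset.sum_eq_zero fun j hj => ?_
    have hj1 : 1 ≤ j := (Finset.mem_Icc.1 hj).1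
    have he : Even (2 * j) := even_two_mul j
    have ho : ¬ Even (2 * j - 1) := by
      intro hcon; rw [Nat.even_iff] at hcon; omega
    rw [if_pos he, if_neg ho]
    ring
  -- representation of H as a normalized signed sum
  have hHrep : ∀ t : ℝ, ∀ ω : Ω, H t ω
      = (∑ i ∈ Finset.Icc 1 (2 ^ (n + 1)),
          (if Even i then (1:ℝ) else -1) * (if t < V (X i ω) then (1:ℝ) else 0))
        / ((2 ^ n : ℕ) : ℝ) := by
    intro t ω
    have h2 : ∑ i ∈ Finset.Icc 1 (2 ^ (n + 1)),
        (if Even i then (1:ℝ) else -1) * (if t < V (X i ω) then (1:ℝ) else 0)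
        = (∑ j ∈ Finset.Icc 1 (2 ^ n), (if t < V (X (2 * j) ω) then (1:ℝ) else 0))
          - ∑ j ∈ Finset.Icc 1 (2 ^ n), (if t < V (X (2 * j - 1) ω) then (1:ℝ) else 0) := by
      rw [hc, pairSum, ← Finset.sum_sub_distrib]
      refine Finset.sum_congr rfl fun j hj => ?_
      have hj1 : 1 ≤ j := (Finset.mem_Icc.1 hj).1
      have he : Even (2 * j) := even_two_mul j
      have ho : ¬ Even (2 * j - 1) := by
        intro hcon; rw [Nat.even_iff] at hcon; omega
      rw [if_pos he, if_neg ho]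
      ring
    have h1 : H t ω
        = ∑ s, empPmf (fun i => X (2 * i)) (2 ^ n) ω s * (if t < V s then (1:ℝ) else 0)
          - ∑ s, empPmf (fun i => X (2 * i - 1)) (2 ^ n) ω s * (if t < V s then (1:ℝ) else 0) := by
      simp only [hH]
      rw [← Finset.sum_sub_distrib]
      exact Finset.sum_congr rfl fun s _ => by ring
    rw [h1, empPmf_expect, empPmf_expect, h2, sub_div]
  -- per-t second moment bound
  have hexp : ∀ t : ℝ, ∫ ω, (H t ω) ^ 2 ∂μ ≤ 2 / ((2 ^ n : ℕ) : ℝ) := by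
    intro t
    have h1 : ∀ ω : Ω, (H t ω) ^ 2
        = (∑ i ∈ Finset.Icc 1 (2 ^ (n + 1)),
            (if Even i then (1:ℝ) else -1) * (if t < V (X i ω) then (1:ℝ) else 0)) ^ 2
          / (((2 ^ n : ℕ) : ℝ)) ^ 2 := by
      intro ω; rw [hHrep t ω, div_pow]
    rw [integral_congr_ae (Filter.Eventually.of_forall h1), integral_div]
    have h3 : (∫ ω, (∑ i ∈ Finset.Icc 1 (2 ^ (n + 1)),
        (if Even i then (1:ℝ) else -1) * (if t < V (X i ω) then (1:ℝ) else 0)) ^ 2 ∂μ)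
        ≤ ((2 ^ (n + 1) : ℕ) : ℝ) :=
      exp_sq_le μ p hp (2 ^ (n + 1)) X hXmeas hpair hXlaw
        (fun s => if t < V s then (1:ℝ) else 0)
        (fun s => by show (0:ℝ) ≤ if t < V s then (1:ℝ) else 0; split_ifs <;> norm_num)
        (fun s => by show (if t < V s then (1:ℝ) else 0) ≤ 1; split_ifs <;> norm_num)
        (fun i => if Even i then (1:ℝ) else -1)
        (fun i => by
          show (if Even i then (1:ℝ) else -1) = 1 ∨ (if Even i then (1:ℝ) else -1) = -1
          split_ifs
          exacts [Or.inl rfl, Or.inr rfl])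
        hεsum
    have h4 : (0:ℝ) < (((2 ^ n : ℕ) : ℝ)) ^ 2 := by positivity
    calc (∫ ω, (∑ i ∈ Finset.Icc 1 (2 ^ (n + 1)),
            (if Even i then (1:ℝ) else -1) * (if t < V (X i ω) then (1:ℝ) else 0)) ^ 2 ∂μ)
          / (((2 ^ n : ℕ) : ℝ)) ^ 2
        ≤ ((2 ^ (n + 1) : ℕ) : ℝ) / (((2 ^ n : ℕ) : ℝ)) ^ 2 := by
          apply div_le_div_of_nonneg_right h3 h4.le
      _ = 2 / ((2 ^ n : ℕ) : ℝ) := by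
          rw [hc]
          push_cast
          field_simp
  -- measurability
  have hHmeas : Measurable fun q : Ω × ℝ => H q.2 q.1 := by
    simp only [hH]
    apply Finset.measurable_sum
    intro s _
    have h1 : Measurable fun ω : Ω => empPmf (fun i => X (2 * i)) (2 ^ n) ω s
        - empPmf (fun i => X (2 * i - 1)) (2 ^ n) ω s :=
      (measurable_empPmf _ (fun i => hXmeas _) _ s).sub
        (measurable_empPmf _ (fun i => hXmeas _) _ s)
    have h2 : Measurable fun t : ℝ => (if t < V s then (1:ℝ) else 0) :=
      Measurable.ite measurableSet_Iio measurable_const measurable_const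
    exact (h1.comp measurable_fst).mul (h2.comp measurable_snd)
  have hH2meas : ∀ ω, Measurable fun t => (H t ω) ^ 2 := fun ω =>
    (hHmeas.comp (measurable_const.prodMk measurable_id)).pow_const 2
  have hH2int : ∀ ω, Integrable (fun t => (H t ω) ^ 2) ν := by
    intro ω
    refine Integrable.mono' (integrable_const 4) (hH2meas ω).aestronglyMeasurable
      (Filter.Eventually.of_forall fun t => ?_)
    rw [Real.norm_eq_abs, abs_of_nonneg (sq_nonneg _), ← sq_abs]
    nlinarith [hHbdd t ω, abs_nonneg (H t ω)]
  set g : Ω → ℝ := fun ω => ∫ t, (H t ω) ^ 2 ∂ν with hg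
  have hgmeas : AEStronglyMeasurable g μ :=
    ((hHmeas.pow_const 2).stronglyMeasurable.integral_prod_right' (ν := ν)).aestronglyMeasurable
  have hgnonneg : ∀ ω, 0 ≤ g ω := fun ω => integral_nonneg fun t => sq_nonneg _
  have hgle : ∀ ω, g ω ≤ M * 4 := by
    intro ω
    have h : g ω ≤ ∫ _ : ℝ, (4:ℝ) ∂ν :=
      integral_mono (hH2int ω) (integrable_const 4) (fun t => by
        have h1 := hHbdd t ω
        nlinarith [sq_abs (H t ω), abs_nonneg (H t ω)])
    rwa [integral_const, measureReal_def, hνuniv, smul_eq_mul] at h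
  have hgint : Integrable g μ :=
    Integrable.mono' (integrable_const (M * 4)) hgmeas
      (Filter.Eventually.of_forall fun ω => by
        rw [Real.norm_eq_abs, abs_of_nonneg (hgnonneg ω)]; exact hgle ω)
  -- pointwise comparison
  have hpt : ∀ ω, (fstarTV σ (empPmf X (2 ^ (n + 1)) ω) V
        - 1 / 2 * fstarTV σ (empPmf (fun i => X (2 * i)) (2 ^ n) ω) V
        - 1 / 2 * fstarTV σ (empPmf (fun i => X (2 * i - 1)) (2 ^ n) ω) V) ^ 2
      ≤ M / 4 * g ω := by
    intro ω
    have h1 := hdelta ω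
    have hcs := sq_integral_abs_le ν (hHint ω).aestronglyMeasurable (fun t => hHbdd t ω)
    rw [hνuniv] at hcs
    have h2 : (fstarTV σ (empPmf X (2 ^ (n + 1)) ω) V
        - 1 / 2 * fstarTV σ (empPmf (fun i => X (2 * i)) (2 ^ n) ω) V
        - 1 / 2 * fstarTV σ (empPmf (fun i => X (2 * i - 1)) (2 ^ n) ω) V) ^ 2
        ≤ ((∫ t, |H t ω| ∂ν) / 2) ^ 2 := by
      rw [← sq_abs]
      exact pow_le_pow_left₀ (abs_nonneg _) h1 2
    have h3 : ((∫ t, |H t ω| ∂ν) / 2) ^ 2 = (∫ t, |H t ω| ∂ν) ^ 2 / 4 := by ring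
    simp only [hg]
    linarith
  -- assemble
  have main1 : (∫ ω, (fstarTV σ (empPmf X (2 ^ (n + 1)) ω) V
        - 1 / 2 * fstarTV σ (empPmf (fun i => X (2 * i)) (2 ^ n) ω) V
        - 1 / 2 * fstarTV σ (empPmf (fun i => X (2 * i - 1)) (2 ^ n) ω) V) ^ 2 ∂μ)
      ≤ ∫ ω, M / 4 * g ω ∂μ :=
    integral_mono_of_nonneg (Filter.Eventually.of_forall fun ω => sq_nonneg _)
      (hgint.const_mul _) (Filter.Eventually.of_forall hpt)
  have hswap : ∫ ω, g ω ∂μ = ∫ t, (∫ ω, (H t ω) ^ 2 ∂μ) ∂ν := by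
    have hint : Integrable (Function.uncurry fun (ω : Ω) (t : ℝ) => (H t ω) ^ 2) (μ.prod ν) := by
      refine Integrable.mono' (integrable_const 4)
        ((hHmeas.pow_const 2).aestronglyMeasurable)
        (Filter.Eventually.of_forall fun q => ?_)
      show ‖(H q.2 q.1) ^ 2‖ ≤ 4
      rw [Real.norm_eq_abs, abs_of_nonneg (sq_nonneg _), ← sq_abs]
      nlinarith [hHbdd q.2 q.1, abs_nonneg (H q.2 q.1)]
    exact integral_integral_swap hint
  have main4 : ∫ t, (∫ ω, (H t ω) ^ 2 ∂μ) ∂ν ≤ M * (2 / ((2 ^ n : ℕ) : ℝ)) := by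
    have h := integral_mono_of_nonneg (μ := ν)
      (Filter.Eventually.of_forall fun t => integral_nonneg fun ω => sq_nonneg _)
      (integrable_const (2 / ((2 ^ n : ℕ) : ℝ)))
      (Filter.Eventually.of_forall hexp)
    rwa [integral_const, measureReal_def, hνuniv, smul_eq_mul] at h
  calc (∫ ω, (fstarTV σ (empPmf X (2 ^ (n + 1)) ω) V
        - 1 / 2 * fstarTV σ (empPmf (fun i => X (2 * i)) (2 ^ n) ω) V
        - 1 / 2 * fstarTV σ (empPmf (fun i => X (2 * i - 1)) (2 ^ n) ω) V) ^ 2 ∂μ)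
      ≤ ∫ ω, M / 4 * g ω ∂μ := main1
    _ = M / 4 * ∫ ω, g ω ∂μ := integral_const_mul _ _
    _ ≤ M / 4 * (M * (2 / ((2 ^ n : ℕ) : ℝ))) := by
        refine mul_le_mul_of_nonneg_left ?_ (by positivity)
        rw [hswap]
        exact main4
    _ ≤ 3 * ((3 * Real.sqrt ((2 * ↑n + 1) * Real.log 2 + Real.log 18)) ^ 2 + 1)
          * M ^ 2 * (2 : ℝ) ^ (-(n : ℝ)) := by
        have hrpow : (2 : ℝ) ^ (-(n : ℝ)) = (((2 ^ n : ℕ) : ℝ))⁻¹ := by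
          rw [Real.rpow_neg (by norm_num : (0:ℝ) ≤ 2), Real.rpow_natCast]
          push_cast
          ring
        rw [hrpow]
        set kk : ℝ := (((2 ^ n : ℕ) : ℝ))⁻¹ with hkk
        have h1 : (2:ℝ) / ((2 ^ n : ℕ) : ℝ) = 2 * kk := by rw [hkk, div_eq_mul_inv]
        rw [h1]
        have hC : 0 ≤ (3 * Real.sqrt ((2 * ↑n + 1) * Real.log 2 + Real.log 18)) ^ 2 :=
          sq_nonneg _
        have ha : 0 ≤ M ^ 2 * kk := by positivity
        nlinarith [mul_nonneg hC ha]
end
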